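/- arXiv:2511.06162 — 2 statements merged into one kernel-verified Lean document; each statement's English description precedes it below -/
import Mathlib

section
/- Let (T, L, c, r) be a rooted WDTAP instance in which every link is an up-link or a down-link. For every subset B of the tree arcs there exists a signing σ: B → {−1, +1} such that for every link ℓ ∈ L, the sum Σ_{a ∈ cov⃗(ℓ) ∩ B} σ(a) lies in {−1, 0, 1}. Consequently (by the Ghouila-Houri criterion) the arc-link-coverage matrix is totally unimodular. -/
open scoped Classical

/-- A tree on vertex set `V`, rooted at `root`, encoded via the parent function.
Every non-root vertex `z` corresponds to the unique tree edge/arc `a_z` between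
`z` and `parent z`. -/
structure ArcTree (V : Type*) where
  root : V
  parent : V → V
  parent_root : parent root = root
  reaches_root : ∀ v : V, ∃ n : ℕ, parent^[n] v = root

namespace ArcTree

variable {V : Type*}

/-- `x` is an ancestor of `y` (possibly `x = y`). -/
def anc (T : ArcTree V) (x y : V) : Prop := ∃ n : ℕ, T.parent^[n] y = x

/-- The arc `a_z` (between `z` and `parent z`, for `z ≠ root`) lies on the
tree path between `u` and `v`. -/
def arcOnPath (T : ArcTree V) (u v z : V) : Prop :=
  z ≠ T.root ∧ ¬ (T.anc z u ↔ T.anc z v)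

/-- The vertex `x` lies on the tree path between `u` and `v`. -/
def onPath (T : ArcTree V) (u v x : V) : Prop :=
  (T.anc x u ∨ T.anc x v) ∧ ∀ z, T.anc z u → T.anc z v → T.anc z x

/-- `x` is an inner vertex of the tree path between `u` and `v`. -/
def innerOnPath (T : ArcTree V) (u v x : V) : Prop :=
  T.onPath u v x ∧ x ≠ u ∧ x ≠ v

/-- `w` is the least common ancestor of `u` and `v`. -/
def isLca (T : ArcTree V) (u v w : V) : Prop :=
  T.anc w u ∧ T.anc w v ∧ ∀ z, T.anc z u → T.anc z v → T.anc z w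

end ArcTree

section Cover

variable {V : Type*}

/- Orientation convention: `up z = true` means the arc `a_z` is directed from `z` to
`parent z` (an up-arc, pointing towards the root); `up z = false` means it is directed
from `parent z` to `z` (a down-arc). -/

/-- The directed link `ℓ = (u, v)` covers the arc `a_z`, i.e. `a_z` is a backward arc
of the tree path from `u` to `v` (equivalently, the walk from `v` back to `u`
traverses `a_z` in its forward direction). -/
def covers (T : ArcTree V) (up : V → Bool) (ℓ : V × V) (z : V) : Prop :=
  z ≠ T.root ∧
    ((T.anc z ℓ.2 ∧ ¬ T.anc z ℓ.1 ∧ up z = true) ∨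
     (T.anc z ℓ.1 ∧ ¬ T.anc z ℓ.2 ∧ up z = false))

/-- The link `ℓ = (u,v)` covers the arc `a_z` in the wrong direction, i.e. `a_z` is a
forward arc of the tree path from `u` to `v`. -/
def wcovers (T : ArcTree V) (up : V → Bool) (ℓ : V × V) (z : V) : Prop :=
  z ≠ T.root ∧
    ((T.anc z ℓ.1 ∧ ¬ T.anc z ℓ.2 ∧ up z = true) ∨
     (T.anc z ℓ.2 ∧ ¬ T.anc z ℓ.1 ∧ up z = false))

/-- `ℓ'` is a shadow of `ℓ`: the endpoints of `ℓ'` lie, in this order, on the tree path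
of `ℓ`. -/
def IsShadow (T : ArcTree V) (ℓ ℓ' : V × V) : Prop :=
  T.onPath ℓ.1 ℓ.2 ℓ'.1 ∧ T.onPath ℓ'.1 ℓ.2 ℓ'.2

/-- `x` is an inner vertex of the path of the generic shadow of `ℓ` (the minimal shadow
with the same directed coverage): `x` lies on `P_ℓ` and `ℓ` covers arcs on both sides
of `x`. -/
def innerGeneric (T : ArcTree V) (up : V → Bool) (ℓ : V × V) (x : V) : Prop :=
  T.onPath ℓ.1 ℓ.2 x ∧
    (∃ z, covers T up ℓ z ∧ T.arcOnPath ℓ.1 x z) ∧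
    (∃ z, covers T up ℓ z ∧ T.arcOnPath x ℓ.2 z)

/-- The arc `a_z` (lying in the subtree of `v`) is visible to `v` with respect to the
link set `L'`. -/
def visibleArc (T : ArcTree V) (up : V → Bool) (L' : Set (V × V)) (v z : V) : Prop :=
  T.anc v z ∧ z ≠ v ∧ ∃ ℓ ∈ L', covers T up ℓ z ∧ innerGeneric T up ℓ v

/-- A set of arcs (encoded by their lower endpoints) is ancestor-free: no arc of the
set lies on the path from another arc's apex (top endpoint) to the root. -/
def AncestorFree (T : ArcTree V) (S : Set V) : Prop :=
  ∀ z ∈ S, ∀ z' ∈ S, z ≠ z' → ¬ T.anc z' (T.parent z)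

/-- The visible up-width of `v` w.r.t. the link set `L'` is at most `k`. -/
def upWidthLE (T : ArcTree V) (up : V → Bool) (L' : Set (V × V)) (v : V) (k : ℕ) : Prop :=
  ∀ S : Finset V, AncestorFree T (S : Set V) →
    (∀ z ∈ S, up z = true ∧ visibleArc T up L' v z) → S.card ≤ k

/-- The visible down-width of `v` w.r.t. the link set `L'` is at most `k`. -/
def downWidthLE (T : ArcTree V) (up : V → Bool) (L' : Set (V × V)) (v : V) (k : ℕ) : Prop :=
  ∀ S : Finset V, AncestorFree T (S : Set V) →
    (∀ z ∈ S, up z = false ∧ visibleArc T up L' v z) → S.card ≤ k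

/-- The link `ℓ` points into the subtree `T_v`. -/
def pointsInto (T : ArcTree V) (v : V) (ℓ : V × V) : Prop :=
  T.anc v ℓ.2 ∧ ℓ.2 ≠ v ∧ ¬ T.anc v ℓ.1

/-- The link `ℓ` points out of the subtree `T_v`. -/
def pointsOut (T : ArcTree V) (v : V) (ℓ : V × V) : Prop :=
  T.anc v ℓ.1 ∧ ℓ.1 ≠ v ∧ ¬ T.anc v ℓ.2

/-- `v` is up-independent w.r.t. the link set `L'`: every link either covers no up-arc
of the subtree `T_v`, or its whole coverage lies inside `T_v`. -/
def upIndep (T : ArcTree V) (up : V → Bool) (L' : Set (V × V)) (v : V) : Prop :=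
  ∀ ℓ ∈ L', (¬ ∃ z, covers T up ℓ z ∧ T.anc v z ∧ z ≠ v ∧ up z = true) ∨
    (∀ z, covers T up ℓ z → T.anc v z ∧ z ≠ v)

/-- `v` is down-independent w.r.t. the link set `L'`. -/
def downIndep (T : ArcTree V) (up : V → Bool) (L' : Set (V × V)) (v : V) : Prop :=
  ∀ ℓ ∈ L', (¬ ∃ z, covers T up ℓ z ∧ T.anc v z ∧ z ≠ v ∧ up z = false) ∨
    (∀ z, covers T up ℓ z → T.anc v z ∧ z ≠ v)

/-- A feasible (integral) solution: every arc is covered by some link of `F`. -/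
def Feasible (T : ArcTree V) (up : V → Bool) (F : Finset (V × V)) : Prop :=
  ∀ z, z ≠ T.root → ∃ ℓ ∈ F, covers T up ℓ z

/-- `F` is shadow-minimal: no link of `F` can be replaced by a proper shadow while
maintaining feasibility. -/
def ShadowMinimal (T : ArcTree V) (up : V → Bool) (F : Finset (V × V)) : Prop :=
  ∀ ℓ ∈ F, ∀ ℓ' : V × V, IsShadow T ℓ ℓ' → ℓ' ≠ ℓ →
    ¬ Feasible T up (insert ℓ' (F.erase ℓ))

/-- A splitting of the link set: each link is mapped to a set of shadows whose tree
paths partition the arc set of its tree path. -/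
def IsSplitting (T : ArcTree V) (σ : V × V → Finset (V × V)) : Prop :=
  ∀ ℓ : V × V,
    (σ ℓ).Nonempty ∧
    (∀ ℓ' ∈ σ ℓ, IsShadow T ℓ ℓ' ∧ (ℓ'.1 ≠ ℓ'.2 ∨ ℓ' = ℓ)) ∧
    (∀ z, T.arcOnPath ℓ.1 ℓ.2 z ↔ ∃ ℓ' ∈ σ ℓ, T.arcOnPath ℓ'.1 ℓ'.2 z) ∧
    (∀ ℓ₁ ∈ σ ℓ, ∀ ℓ₂ ∈ σ ℓ, ℓ₁ ≠ ℓ₂ →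
      ∀ z, T.arcOnPath ℓ₁.1 ℓ₁.2 z → ¬ T.arcOnPath ℓ₂.1 ℓ₂.2 z)

/-- The LP solution obtained from `x` by applying the splitting `σ`. -/
noncomputable def splitSol [Fintype V] (σ : V × V → Finset (V × V)) (x : V × V → ℝ) :
    V × V → ℝ :=
  fun ℓ' => ∑ ℓ : V × V, if ℓ' ∈ σ ℓ then x ℓ else 0

/-- `x` is a feasible solution of the WDTAP set-covering LP. -/
def FeasLP [Fintype V] (T : ArcTree V) (up : V → Bool) (x : V × V → ℝ) : Prop :=
  (∀ ℓ, 0 ≤ x ℓ) ∧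
    ∀ z, z ≠ T.root → 1 ≤ ∑ ℓ : V × V, if covers T up ℓ z then x ℓ else 0

end Cover


section AuxLemmas

namespace ArcTree

variable {V : Type*}

lemma anc_refl (T : ArcTree V) (x : V) : T.anc x x := ⟨0, rfl⟩

lemma anc_trans (T : ArcTree V) {x y z : V} (h1 : T.anc x y) (h2 : T.anc z x) :
    T.anc z y := by
  obtain ⟨n, hn⟩ := h1; obtain ⟨m, hm⟩ := h2
  exact ⟨m + n, by rw [Function.iterate_add_apply, hn, hm]⟩

lemma iterate_root (T : ArcTree V) (n : ℕ) : T.parent^[n] T.root = T.root :=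
  Function.iterate_fixed T.parent_root n

lemma anc_root (T : ArcTree V) (v : V) : T.anc T.root v := T.reaches_root v

noncomputable def depth (T : ArcTree V) (v : V) : ℕ := Nat.find (T.reaches_root v)

lemma depth_spec (T : ArcTree V) (v : V) : T.parent^[T.depth v] v = T.root :=
  Nat.find_spec (T.reaches_root v)

lemma eq_root_of_depth_zero (T : ArcTree V) {v : V} (h : T.depth v = 0) : v = T.root := by
  have := T.depth_spec v
  rwa [h, Function.iterate_zero_apply] at this

lemma depth_le (T : ArcTree V) {v : V} {n : ℕ} (h : T.parent^[n] v = T.root) :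
    T.depth v ≤ n := Nat.find_min' (T.reaches_root v) h

lemma depth_lt_of_anc (T : ArcTree V) {x y : V} (h : T.anc x y) (hne : x ≠ y) :
    T.depth x < T.depth y := by
  obtain ⟨n, hn⟩ := h
  have hn0 : n ≠ 0 := by
    rintro rfl
    exact hne (by simpa using hn.symm)
  rcases le_or_gt n (T.depth y) with hle | hlt
  · have hx : T.parent^[T.depth y - n] x = T.root := by
      rw [← hn, ← Function.iterate_add_apply, Nat.sub_add_cancel hle]
      exact T.depth_spec y
    have := T.depth_le hx
    omega
  · have hx : x = T.root := by
      have : T.parent^[(n - T.depth y) + T.depth y] y = x := by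
        rw [Nat.sub_add_cancel hlt.le]; exact hn
      rw [Function.iterate_add_apply, T.depth_spec, T.iterate_root] at this
      exact this.symm
    have hy : T.depth y ≠ 0 := by
      intro h0
      exact hne (hx.trans (T.eq_root_of_depth_zero h0).symm)
    have hx0 : T.depth x = 0 := by
      have : T.depth x ≤ 0 := T.depth_le (by rw [hx, Function.iterate_zero_apply])
      omega
    omega

lemma anc_antisymm (T : ArcTree V) {x y : V} (h1 : T.anc x y) (h2 : T.anc y x) : x = y := by
  by_contra hne
  have := T.depth_lt_of_anc h1 hne
  have := T.depth_lt_of_anc h2 (Ne.symm hne)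
  omega

lemma anc_comparable (T : ArcTree V) {x y w : V} (hx : T.anc x w) (hy : T.anc y w) :
    T.anc x y ∨ T.anc y x := by
  obtain ⟨n, hn⟩ := hx; obtain ⟨m, hm⟩ := hy
  rcases le_total n m with h | h
  · right
    exact ⟨m - n, by rw [← hn, ← Function.iterate_add_apply, Nat.sub_add_cancel h, hm]⟩
  · left
    exact ⟨n - m, by rw [← hm, ← Function.iterate_add_apply, Nat.sub_add_cancel h, hn]⟩

lemma anc_of_depth_le (T : ArcTree V) {x y w : V} (hx : T.anc x w) (hy : T.anc y w)
    (h : T.depth x ≤ T.depth y) : T.anc x y := by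
  rcases T.anc_comparable hx hy with h' | h'
  · exact h'
  · rcases eq_or_ne y x with rfl | hne
    · exact T.anc_refl y
    · exact absurd (T.depth_lt_of_anc h' hne) (by omega)

lemma exists_lca [Fintype V] (T : ArcTree V) (x y : V) :
    ∃ g, T.anc g x ∧ T.anc g y ∧ ∀ z, T.anc z x → T.anc z y → T.anc z g := by
  classical
  obtain ⟨g, hg, hmax⟩ := Finset.exists_max_image
    (Finset.univ.filter fun z => T.anc z x ∧ T.anc z y) T.depth
    ⟨T.root, by simp [T.anc_root]⟩
  simp only [Finset.mem_filter, Finset.mem_univ, true_and] at hg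
  refine ⟨g, hg.1, hg.2, fun z hzx hzy => ?_⟩
  have hz : z ∈ Finset.univ.filter fun z => T.anc z x ∧ T.anc z y := by
    simp [hzx, hzy]
  exact T.anc_of_depth_le hzx hg.1 (hmax z hz)

end ArcTree

end AuxLemmas

section ChainSum

variable {V : Type*}

open Finset in
lemma chain_sum (T : ArcTree V) (D : Finset V)
    (hch : ∀ x ∈ D, ∀ y ∈ D, T.anc x y ∨ T.anc y x) :
    (∑ z ∈ D, (-1 : ℤ) ^ ((D.filter fun z' => T.anc z' z).card)) ∈ ({-1, 0} : Set ℤ) := by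
  classical
  induction D using Finset.strongInduction with
  | _ D ih =>
    rcases D.eq_empty_or_nonempty with rfl | hne
    · simp
    obtain ⟨t, htD, htmin⟩ := Finset.exists_min_image D T.depth hne
    have hanc : ∀ z ∈ D, T.anc t z := by
      intro z hz
      rcases eq_or_ne z t with rfl | hne'
      · exact T.anc_refl z
      rcases hch t htD z hz with h | h
      · exact h
      · exact absurd (T.depth_lt_of_anc h hne') (by have := htmin z hz; omega)
    have hcard1 : (D.filter fun z' => T.anc z' t).card = 1 := by
      have hset : (D.filter fun z' => T.anc z' t) = {t} := by
        ext z'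
        simp only [Finset.mem_filter, Finset.mem_singleton]
        constructor
        · rintro ⟨hz', ha⟩
          by_contra hne'
          exact absurd (T.depth_lt_of_anc ha hne') (by have := htmin z' hz'; omega)
        · rintro rfl; exact ⟨htD, T.anc_refl _⟩
      rw [hset, Finset.card_singleton]
    have hstep : ∀ z ∈ D.erase t,
        (D.filter fun z' => T.anc z' z).card
          = ((D.erase t).filter fun z' => T.anc z' z).card + 1 := by
      intro z hz
      have hzD := Finset.mem_of_mem_erase hz
      conv_lhs => rw [← Finset.insert_erase htD]
      rw [Finset.filter_insert, if_pos (hanc z hzD),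
        Finset.card_insert_of_notMem (by simp)]
    have hih := ih (D.erase t) (Finset.erase_ssubset htD)
      (fun x hx y hy => hch x (Finset.mem_of_mem_erase hx) y (Finset.mem_of_mem_erase hy))
    rw [← Finset.add_sum_erase _ _ htD, hcard1]
    rw [Finset.sum_congr rfl (fun z hz => by rw [hstep z hz, pow_succ])]
    rw [← Finset.sum_mul]
    set S' := ∑ z ∈ D.erase t, (-1:ℤ) ^ (((D.erase t).filter fun z' => T.anc z' z).card)
    simp only [Set.mem_insert_iff, Set.mem_singleton_iff] at hih ⊢
    rcases hih with h | h <;> rw [h] <;> norm_num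

end ChainSum

section SegSum

variable {V : Type*}

lemma seg_sum [Fintype V] (T : ArcTree V) (up : V → Bool) (B : Set V) (w w' : V) (b : Bool) :
    (∑ z : V, if z ∈ B ∧ (z ≠ T.root ∧ T.anc z w ∧ ¬ T.anc z w' ∧ up z = b)
        then (-1 : ℤ) ^ ((Finset.univ.filter fun z' =>
          z' ∈ B ∧ z' ≠ T.root ∧ T.anc z' z ∧ up z' = up z).card) else 0)
      ∈ ({-1, 0, 1} : Set ℤ) := by
  classical
  set E : Finset V := Finset.univ.filter fun z' =>
    z' ∈ B ∧ z' ≠ T.root ∧ T.anc z' w ∧ up z' = b with hE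
  set D : Finset V := E.filter (fun z => ¬ T.anc z w') with hD
  set K : Finset V := E.filter (fun z => T.anc z w') with hK
  have hDmem : ∀ z, z ∈ D ↔
      (z ∈ B ∧ (z ≠ T.root ∧ T.anc z w ∧ ¬ T.anc z w' ∧ up z = b)) := by
    intro z
    simp only [hD, hE, Finset.mem_filter, Finset.mem_univ, true_and]
    tauto
  rw [← Finset.sum_filter]
  have hDset : (Finset.univ.filter fun z =>
      z ∈ B ∧ (z ≠ T.root ∧ T.anc z w ∧ ¬ T.anc z w' ∧ up z = b)) = D := by
    ext z
    rw [Finset.mem_filter, hDmem z]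
    simp
  rw [hDset]
  -- chain property of D
  have hchain : ∀ x ∈ D, ∀ y ∈ D, T.anc x y ∨ T.anc y x := by
    intro x hx y hy
    exact T.anc_comparable ((hDmem x).1 hx).2.2.1 ((hDmem y).1 hy).2.2.1
  -- every element of K is an ancestor of every element of D
  have hKD : ∀ z ∈ D, ∀ z' ∈ K, T.anc z' z := by
    intro z hz z' hz'
    have hzP := (hDmem z).1 hz
    simp only [hK, hE, Finset.mem_filter, Finset.mem_univ, true_and] at hz'
    rcases T.anc_comparable hzP.2.2.1 hz'.1.2.2.1 with h | h
    · exact absurd (T.anc_trans hz'.2 h) hzP.2.2.2.1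
    · exact h
  -- exponent identity
  have hexp : ∀ z ∈ D, (Finset.univ.filter fun z' =>
      z' ∈ B ∧ z' ≠ T.root ∧ T.anc z' z ∧ up z' = up z).card
      = K.card + (D.filter fun z' => T.anc z' z).card := by
    intro z hz
    have hzP := (hDmem z).1 hz
    have hset : (Finset.univ.filter fun z' =>
        z' ∈ B ∧ z' ≠ T.root ∧ T.anc z' z ∧ up z' = up z)
        = K ∪ (D.filter fun z' => T.anc z' z) := by
      ext z'
      simp only [Finset.mem_filter, Finset.mem_univ, true_and, Finset.mem_union]
      constructor
      · rintro ⟨hB, hr, ha, hu⟩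
        have haw : T.anc z' w := T.anc_trans hzP.2.2.1 ha
        have hub : up z' = b := by rw [hu, hzP.2.2.2.2]
        by_cases hw' : T.anc z' w'
        · left
          simp only [hK, hE, Finset.mem_filter, Finset.mem_univ, true_and]
          exact ⟨⟨hB, hr, haw, hub⟩, hw'⟩
        · right
          refine ⟨(hDmem z').2 ⟨hB, hr, haw, hw', hub⟩, ha⟩
      · rintro (hz' | hz')
        · have h := hKD z hz z' hz'
          simp only [hK, hE, Finset.mem_filter, Finset.mem_univ, true_and] at hz'
          exact ⟨hz'.1.1, hz'.1.2.1, h, by rw [hz'.1.2.2.2, hzP.2.2.2.2]⟩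
        · obtain ⟨hzD', ha⟩ := hz'
          have h := (hDmem z').1 hzD'
          exact ⟨h.1, h.2.1, ha, by rw [h.2.2.2.2, hzP.2.2.2.2]⟩
    have hdisj : Disjoint K (D.filter fun z' => T.anc z' z) := by
      rw [Finset.disjoint_left]
      intro a haK haD
      obtain ⟨haD', _⟩ := Finset.mem_filter.1 haD
      simp only [hK, Finset.mem_filter] at haK
      exact ((Finset.mem_filter.1 haD').2) haK.2
    rw [hset, Finset.card_union_of_disjoint hdisj]
  rw [Finset.sum_congr rfl (fun z hz => by rw [hexp z hz, pow_add])]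
  rw [← Finset.mul_sum]
  have hcs := chain_sum T D hchain
  simp only [Set.mem_insert_iff, Set.mem_singleton_iff] at hcs ⊢
  rcases Nat.even_or_odd K.card with he | ho
  · rw [he.neg_one_pow]
    rcases hcs with h | h <;> rw [h] <;> norm_num
  · rw [ho.neg_one_pow]
    rcases hcs with h | h <;> rw [h] <;> norm_num

end SegSum

section DetPart

variable {V : Type*}

open scoped Classical in
/-- The generic "filtered root-path interval" matrix. -/
noncomputable def pMat (T : ArcTree V) (up : V → Bool) {k : ℕ} (S : Fin k → V)
    (c : Fin k → V × V × Bool) : Matrix (Fin k) (Fin k) ℚ :=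
  Matrix.of fun i j =>
    if T.anc (S i) (c j).1 ∧ ¬ T.anc (S i) (c j).2.1 ∧ up (S i) = (c j).2.2
    then 1 else 0

lemma keydet [Fintype V] (T : ArcTree V) (up : V → Bool) :
    ∀ k : ℕ, ∀ S : Fin k → V, Function.Injective S → ∀ c : Fin k → V × V × Bool,
      (pMat T up S c).det ∈ Set.range (SignType.cast : SignType → ℚ) := by
  classical
  intro k
  induction k with
  | zero =>
    intro S _ c
    exact ⟨1, by simp [Matrix.det_fin_zero]⟩
  | succ k ih =>
    intro S hS c
    obtain ⟨istar, -, hdeep⟩ := Finset.exists_max_image Finset.univ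
      (fun i : Fin (k+1) => T.depth (S i)) Finset.univ_nonempty
    set b : Bool := up (S istar) with hb
    set P : V → V × V × Bool → Prop :=
      fun z t => T.anc z t.1 ∧ ¬ T.anc z t.2.1 ∧ up z = t.2.2 with hPdef
    have hentry : ∀ (c₀ : Fin (k+1) → V × V × Bool) i j,
        pMat T up S c₀ i j = if P (S i) (c₀ j) then 1 else 0 := by
      intro c₀ i j
      simp only [pMat, Matrix.of_apply, hPdef]
    set J : Finset (Fin (k+1)) := Finset.univ.filter (fun j => P (S istar) (c j)) with hJdef
    rcases J.eq_empty_or_nonempty with hJ | hJ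
    · refine ⟨0, ?_⟩
      rw [SignType.coe_zero, eq_comm]
      apply Matrix.det_eq_zero_of_row_eq_zero istar
      intro j
      have hj : j ∉ J := by rw [hJ]; exact Finset.notMem_empty j
      rw [hentry, if_neg]
      intro hP
      exact hj (Finset.mem_filter.2 ⟨Finset.mem_univ j, hP⟩)
    · set supp : Fin (k+1) → Finset (Fin (k+1)) :=
        fun j => Finset.univ.filter (fun i => P (S i) (c j)) with hsupp
      have hsuppmem : ∀ j i, i ∈ supp j ↔ P (S i) (c j) := by
        intro j i; simp [hsupp]
      have hJP : ∀ j ∈ J, P (S istar) (c j) := by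
        intro j hj
        simpa [hJdef] using hj
      have hF2 : ∀ j ∈ J, ∀ i, P (S i) (c j) ↔
          (T.anc (S i) (S istar) ∧ ¬ T.anc (S i) (c j).2.1 ∧ up (S i) = b) := by
        intro j hj i
        have hjP := hJP j hj
        constructor
        · rintro ⟨h1, h2, h3⟩
          refine ⟨T.anc_of_depth_le h1 hjP.1 (hdeep i (Finset.mem_univ i)), h2, ?_⟩
          rw [h3, hb, hjP.2.2]
        · rintro ⟨h1, h2, h3⟩
          exact ⟨T.anc_trans hjP.1 h1, h2, by rw [h3, hb, hjP.2.2]⟩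
      have hnest : ∀ j ∈ J, ∀ j' ∈ J, supp j ⊆ supp j' ∨ supp j' ⊆ supp j := by
        intro j hj j' hj'
        by_contra hcon
        push_neg at hcon
        obtain ⟨i1, hi1, hi1'⟩ := Finset.not_subset.1 hcon.1
        obtain ⟨i2, hi2, hi2'⟩ := Finset.not_subset.1 hcon.2
        rw [hsuppmem] at hi1 hi2
        rw [hsuppmem] at hi1' hi2'
        rw [hF2 j hj] at hi1
        rw [hF2 j' hj'] at hi2
        have ha1 : T.anc (S i1) ((c j').2.1) := by
          by_contra hna
          exact hi1' ((hF2 j' hj' i1).2 ⟨hi1.1, hna, hi1.2.2⟩)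
        have ha2 : T.anc (S i2) ((c j).2.1) := by
          by_contra hna
          exact hi2' ((hF2 j hj i2).2 ⟨hi2.1, hna, hi2.2.2⟩)
        rcases T.anc_comparable hi1.1 hi2.1 with h | h
        · exact hi1.2.1 (T.anc_trans ha2 h)
        · exact hi2.2.1 (T.anc_trans ha1 h)
      obtain ⟨j0, hj0J, hj0min⟩ := Finset.exists_min_image J (fun j => (supp j).card) hJ
      have hmin : ∀ j ∈ J, supp j0 ⊆ supp j := by
        intro j hj
        rcases hnest j0 hj0J j hj with h | h
        · exact h
        · intro x hx
          rw [Finset.eq_of_subset_of_card_le h (hj0min j hj)]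
          exact hx
      obtain ⟨gv, hg1, hg2, hg3⟩ := T.exists_lca (S istar) ((c j0).2.1)
      set c' : Fin (k+1) → V × V × Bool :=
        fun j => if j ∈ J ∧ j ≠ j0 then (gv, (c j).2.1, b) else c j with hc'
      set Bm : Matrix (Fin (k+1)) (Fin (k+1)) ℚ := pMat T up S c' with hBm
      have hcj0 : c' j0 = c j0 := by simp [hc']
      have hE1 : ∀ i j, pMat T up S c i j
          = Bm i j + (if j ∈ J ∧ j ≠ j0 then (1:ℚ) else 0) * Bm i j0 := by
        intro i j
        rw [hBm, hentry, hentry, hentry, hcj0]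
        by_cases hjc : j ∈ J ∧ j ≠ j0
        · have hcj : c' j = (gv, (c j).2.1, b) := by simp [hc', hjc]
          rw [if_pos hjc, one_mul, hcj]
          have hr_eq : P (S i) (gv, (c j).2.1, b)
              ↔ (T.anc (S i) gv ∧ ¬ T.anc (S i) (c j).2.1 ∧ up (S i) = b) := Iff.rfl
          by_cases hq : P (S i) (c j0)
          · have hp : P (S i) (c j) := by
              have := hmin j hjc.1 ((hsuppmem j0 i).2 hq)
              exact (hsuppmem j i).1 this
            have hr : ¬ P (S i) (gv, (c j).2.1, b) := by
              rintro ⟨h1, -, -⟩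
              exact hq.2.1 (T.anc_trans hg2 h1)
            rw [if_pos hp, if_pos hq, if_neg hr]
            norm_num
          · by_cases hp : P (S i) (c j)
            · obtain ⟨hanc, hw, hup⟩ := (hF2 j hjc.1 i).1 hp
              have haj0 : T.anc (S i) ((c j0).2.1) := by
                by_contra hna
                exact hq ((hF2 j0 hj0J i).2 ⟨hanc, hna, hup⟩)
              have hr : P (S i) (gv, (c j).2.1, b) := ⟨hg3 _ hanc haj0, hw, hup⟩
              rw [if_pos hp, if_pos hr, if_neg hq]
              norm_num
            · have hr : ¬ P (S i) (gv, (c j).2.1, b) := by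
                rintro ⟨h1, h2, h3⟩
                exact hp ((hF2 j hjc.1 i).2 ⟨T.anc_trans hg1 h1, h2, h3⟩)
              rw [if_neg hp, if_neg hq, if_neg hr]
              norm_num
        · have hcj : c' j = c j := by simp [hc', hjc]
          rw [if_neg hjc, zero_mul, add_zero, hcj]
      -- determinant is unchanged by the column operations
      have hdet : (pMat T up S c).det = Bm.det := by
        rw [← Matrix.det_transpose (pMat T up S c), ← Matrix.det_transpose Bm]
        exact Matrix.det_eq_of_forall_row_eq_smul_add_const
          (fun j => if j ∈ J ∧ j ≠ j0 then (1:ℚ) else 0) j0 (by simp)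
          (fun i j => hE1 j i)
      -- row istar of the new matrix is the indicator of j0
      have hrow : ∀ j, Bm istar j = if j = j0 then 1 else 0 := by
        intro j
        rcases eq_or_ne j j0 with rfl | hne
        · rw [if_pos rfl, hBm, hentry, hcj0, if_pos (hJP j hj0J)]
        · rw [if_neg hne]
          by_cases hjJ : j ∈ J
          · have h1 : pMat T up S c istar j = 1 := by
              rw [hentry, if_pos (hJP j hjJ)]
            have h2 : Bm istar j0 = 1 := by
              rw [hBm, hentry, hcj0, if_pos (hJP j0 hj0J)]
            have h3 := hE1 istar j
            rw [h1, h2, if_pos ⟨hjJ, hne⟩] at h3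
            linarith
          · have hcj : c' j = c j := by simp [hc', hjJ]
            rw [hBm, hentry, hcj, if_neg]
            intro hP
            exact hjJ (Finset.mem_filter.2 ⟨Finset.mem_univ j, hP⟩)
      -- Laplace expansion along row istar
      have hminor := ih (S ∘ istar.succAbove)
        (hS.comp Fin.succAbove_right_injective) (c' ∘ j0.succAbove)
      obtain ⟨s, hs⟩ := hminor
      have hsub : Bm.submatrix istar.succAbove j0.succAbove
          = pMat T up (S ∘ istar.succAbove) (c' ∘ j0.succAbove) := rfl
      have hlap : Bm.det = (-1:ℚ) ^ ((istar : ℕ) + (j0 : ℕ))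
          * (pMat T up (S ∘ istar.succAbove) (c' ∘ j0.succAbove)).det := by
        rw [Matrix.det_succ_row Bm istar]
        rw [Finset.sum_eq_single j0]
        · rw [hrow j0, if_pos rfl, hsub, mul_one]
        · intro j _ hne
          rw [hrow j, if_neg hne, mul_zero, zero_mul]
        · intro h
          exact absurd (Finset.mem_univ j0) h
      rw [hdet, hlap, ← hs]
      rcases Nat.even_or_odd ((istar : ℕ) + (j0 : ℕ)) with he | ho
      · rw [he.neg_one_pow, one_mul]
        exact ⟨s, rfl⟩
      · rw [ho.neg_one_pow]
        exact ⟨-s, by rw [SignType.coe_neg]; ring⟩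

end DetPart

/-- If every link is an up-link or a down-link, then every subset `B`
of the tree arcs admits a `±1` signing under which every link's signed covered sum lies
in `{-1, 0, 1}`; consequently (Ghouila-Houri) the arc-link-coverage matrix is totally
unimodular. -/
theorem up_down_links_signing_and_TU {V : Type*} [Fintype V]
    (T : ArcTree V) (up : V → Bool)
    (Lk : Type*) (ends : Lk → V × V)
    (hL : ∀ ℓ : Lk, T.anc (ends ℓ).2 (ends ℓ).1 ∨ T.anc (ends ℓ).1 (ends ℓ).2)
    (M : Matrix {z : V // z ≠ T.root} Lk ℚ)
    (hM : ∀ a ℓ, M a ℓ = if covers T up (ends ℓ) a.1 then 1 else 0) :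
    (∀ B : Set V, ∃ sg : V → ℤ, (∀ z ∈ B, sg z = 1 ∨ sg z = -1) ∧
      ∀ ℓ : Lk,
        (∑ z : V, if z ∈ B ∧ covers T up (ends ℓ) z then sg z else 0)
          ∈ ({-1, 0, 1} : Set ℤ)) ∧
    M.IsTotallyUnimodular := by
  constructor
  · -- Part 1: the signing
    intro B
    refine ⟨fun z => (-1 : ℤ) ^ ((Finset.univ.filter fun z' =>
        z' ∈ B ∧ z' ≠ T.root ∧ T.anc z' z ∧ up z' = up z).card), fun z _ => ?_, fun ℓ => ?_⟩
    · rcases Nat.even_or_odd ((Finset.univ.filter fun z' =>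
          z' ∈ B ∧ z' ≠ T.root ∧ T.anc z' z ∧ up z' = up z).card) with he | ho
      · left; exact he.neg_one_pow
      · right; exact ho.neg_one_pow
    · rcases Classical.em (T.anc (ends ℓ).1 (ends ℓ).2) with ha | ha
      · have hcov : ∀ z, (z ∈ B ∧ covers T up (ends ℓ) z) ↔
            (z ∈ B ∧ (z ≠ T.root ∧ T.anc z (ends ℓ).2 ∧ ¬ T.anc z (ends ℓ).1
              ∧ up z = true)) := by
          intro z
          simp only [covers]
          constructor
          · rintro ⟨hB, hr, (⟨h1, h2, h3⟩ | ⟨h1, h2, h3⟩)⟩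
            · exact ⟨hB, hr, h1, h2, h3⟩
            · exact absurd (T.anc_trans ha h1) h2
          · rintro ⟨hB, hr, h1, h2, h3⟩
            exact ⟨hB, hr, Or.inl ⟨h1, h2, h3⟩⟩
        rw [Finset.sum_congr rfl fun z _ => if_congr (hcov z) rfl rfl]
        exact seg_sum T up B (ends ℓ).2 (ends ℓ).1 true
      · have ha' : T.anc (ends ℓ).2 (ends ℓ).1 := (hL ℓ).resolve_right ha
        have hcov : ∀ z, (z ∈ B ∧ covers T up (ends ℓ) z) ↔
            (z ∈ B ∧ (z ≠ T.root ∧ T.anc z (ends ℓ).1 ∧ ¬ T.anc z (ends ℓ).2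
              ∧ up z = false)) := by
          intro z
          simp only [covers]
          constructor
          · rintro ⟨hB, hr, (⟨h1, h2, h3⟩ | ⟨h1, h2, h3⟩)⟩
            · exact absurd (T.anc_trans ha' h1) h2
            · exact ⟨hB, hr, h1, h2, h3⟩
          · rintro ⟨hB, hr, h1, h2, h3⟩
            exact ⟨hB, hr, Or.inr ⟨h1, h2, h3⟩⟩
        rw [Finset.sum_congr rfl fun z _ => if_congr (hcov z) rfl rfl]
        exact seg_sum T up B (ends ℓ).1 (ends ℓ).2 false
  · -- Part 2: total unimodularity
    intro k f g hf hg
    classical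
    set S : Fin k → V := fun i => (f i).1 with hSdef
    have hSinj : Function.Injective S := fun i j h => hf (Subtype.ext h)
    set c : Fin k → V × V × Bool := fun j =>
      if T.anc (ends (g j)).1 (ends (g j)).2
      then ((ends (g j)).2, (ends (g j)).1, true)
      else ((ends (g j)).1, (ends (g j)).2, false) with hcdef
    have hmat : M.submatrix f g = pMat T up S c := by
      ext i j
      rw [Matrix.submatrix_apply, hM]
      show _ = if T.anc (S i) (c j).1 ∧ ¬ T.anc (S i) (c j).2.1 ∧ up (S i) = (c j).2.2
        then (1:ℚ) else 0
      refine if_congr ?_ rfl rfl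
      have hroot : (f i).1 ≠ T.root := (f i).2
      by_cases hacase : T.anc (ends (g j)).1 (ends (g j)).2
      · have hcj : c j = ((ends (g j)).2, (ends (g j)).1, true) := by
          simp [hcdef, hacase]
        rw [hcj]
        simp only [covers]
        constructor
        · rintro ⟨hr, (⟨h1, h2, h3⟩ | ⟨h1, h2, h3⟩)⟩
          · exact ⟨h1, h2, h3⟩
          · exact absurd (T.anc_trans hacase h1) h2
        · rintro ⟨h1, h2, h3⟩
          exact ⟨hroot, Or.inl ⟨h1, h2, h3⟩⟩
      · have ha' : T.anc (ends (g j)).2 (ends (g j)).1 := (hL (g j)).resolve_right hacase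
        have hcj : c j = ((ends (g j)).1, (ends (g j)).2, false) := by
          simp [hcdef, hacase]
        rw [hcj]
        simp only [covers]
        constructor
        · rintro ⟨hr, (⟨h1, h2, h3⟩ | ⟨h1, h2, h3⟩)⟩
          · exact absurd (T.anc_trans ha' h1) h2
          · exact ⟨h1, h2, h3⟩
        · rintro ⟨h1, h2, h3⟩
          exact ⟨hroot, Or.inr ⟨h1, h2, h3⟩⟩
    rw [hmat]
    exact keydet T up k S hSinj c
end

section
/- Let x be an LP solution for a rooted WDTAP instance, σ a splitting, x' = split(x, σ), and v a non-root vertex. Then x'(L↓_v) ≤ x(L↓_v) and x'(L↑_v) ≤ x(L↑_v), where L↓_v (resp. L↑_v) denotes the set of links pointing into (resp. out of) the subtree T_v. -/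
open scoped Classical

section AuxLemmas

variable {V : Type*}

lemma anc_refl' (T : ArcTree V) (x : V) : T.anc x x := ⟨0, rfl⟩

lemma anc_trans' {T : ArcTree V} {x y z : V} (h1 : T.anc x y) (h2 : T.anc y z) :
    T.anc x z := by
  obtain ⟨n, hn⟩ := h1; obtain ⟨m, hm⟩ := h2
  exact ⟨n + m, by rw [Function.iterate_add_apply, hm, hn]⟩

lemma iterate_root' (T : ArcTree V) (n : ℕ) : T.parent^[n] T.root = T.root := by
  induction n with
  | zero => rfl
  | succ k ih => rw [Function.iterate_succ_apply', ih, T.parent_root]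

lemma anc_antisymm' {T : ArcTree V} {x y : V} (h1 : T.anc x y) (h2 : T.anc y x) :
    x = y := by
  obtain ⟨n, hn⟩ := h1; obtain ⟨m, hm⟩ := h2
  rcases Nat.eq_zero_or_pos (m + n) with h | h
  · have hn0 : n = 0 := by omega
    rw [hn0] at hn; exact hn.symm
  · have hper : T.parent^[m + n] y = y := by
      rw [Function.iterate_add_apply, hn, hm]
    have hk : ∀ k : ℕ, T.parent^[k * (m + n)] y = y := by
      intro k
      induction k with
      | zero => simp
      | succ j ih =>
        have : (j + 1) * (m + n) = j * (m + n) + (m + n) := by ring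
        rw [this, Function.iterate_add_apply, hper, ih]
    obtain ⟨N, hN⟩ := T.reaches_root y
    have hroot : y = T.root := by
      have h1 : T.parent^[(N + 1) * (m + n)] y = y := hk (N + 1)
      have hge : N ≤ (N + 1) * (m + n) := by nlinarith
      have h2 : T.parent^[(N + 1) * (m + n)] y = T.root := by
        have : (N + 1) * (m + n) = ((N + 1) * (m + n) - N) + N := by omega
        rw [this, Function.iterate_add_apply, hN, iterate_root']
      rw [← h1, h2]
    rw [hroot] at hn ⊢
    rw [iterate_root'] at hn
    exact hn.symm

lemma pointsInto_arcOnPath {T : ArcTree V} {v : V} (hv : v ≠ T.root) {ℓ : V × V}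
    (h : pointsInto T v ℓ) : T.arcOnPath ℓ.1 ℓ.2 v :=
  ⟨hv, fun hiff => h.2.2 (hiff.mpr h.1)⟩

lemma pointsOut_arcOnPath {T : ArcTree V} {v : V} (hv : v ≠ T.root) {ℓ : V × V}
    (h : pointsOut T v ℓ) : T.arcOnPath ℓ.1 ℓ.2 v :=
  ⟨hv, fun hiff => h.2.2 (hiff.mp h.1)⟩

lemma shadow_pointsInto {T : ArcTree V} {v : V} (hv : v ≠ T.root)
    {σ : V × V → Finset (V × V)} (hσ : IsSplitting T σ) {ℓ ℓ' : V × V}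
    (hmem : ℓ' ∈ σ ℓ) (hP : pointsInto T v ℓ') : pointsInto T v ℓ := by
  obtain ⟨hv2, hne, hv1⟩ := hP
  obtain ⟨_, hsh, hiff, _⟩ := hσ ℓ
  have harc : T.arcOnPath ℓ.1 ℓ.2 v :=
    (hiff v).2 ⟨ℓ', hmem, pointsInto_arcOnPath hv ⟨hv2, hne, hv1⟩⟩
  obtain ⟨hd, _⟩ := ((hsh ℓ' hmem).1).2
  have h2 : T.anc ℓ'.2 ℓ.2 := by
    rcases hd with h | h
    · exact absurd (anc_trans' hv2 h) hv1
    · exact h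
  have hvℓ2 : T.anc v ℓ.2 := anc_trans' hv2 h2
  refine ⟨hvℓ2, ?_, ?_⟩
  · intro heq
    rw [heq] at h2
    exact hne (anc_antisymm' h2 hv2)
  · intro h
    exact harc.2 ⟨fun _ => hvℓ2, fun _ => h⟩

lemma shadow_pointsOut {T : ArcTree V} {v : V} (hv : v ≠ T.root)
    {σ : V × V → Finset (V × V)} (hσ : IsSplitting T σ) {ℓ ℓ' : V × V}
    (hmem : ℓ' ∈ σ ℓ) (hP : pointsOut T v ℓ') : pointsOut T v ℓ := by
  obtain ⟨hv1, hne, hv2⟩ := hP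
  obtain ⟨_, hsh, hiff, _⟩ := hσ ℓ
  have harc : T.arcOnPath ℓ.1 ℓ.2 v :=
    (hiff v).2 ⟨ℓ', hmem, pointsOut_arcOnPath hv ⟨hv1, hne, hv2⟩⟩
  obtain ⟨⟨hd1, _⟩, ⟨_, hall2⟩⟩ := (hsh ℓ' hmem).1
  have h1 : T.anc ℓ'.1 ℓ.1 := by
    rcases hd1 with h | h
    · exact h
    · exact absurd (anc_trans' hv1 (hall2 ℓ'.1 (anc_refl' T ℓ'.1) h)) hv2
  have hvℓ1 : T.anc v ℓ.1 := anc_trans' hv1 h1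
  refine ⟨hvℓ1, ?_, ?_⟩
  · intro heq
    rw [heq] at h1
    exact hne (anc_antisymm' h1 hv1)
  · intro h
    exact harc.2 ⟨fun _ => h, fun _ => hvℓ1⟩

lemma split_sum_le [Fintype V] {T : ArcTree V}
    {σ : V × V → Finset (V × V)} (hσ : IsSplitting T σ)
    (x : V × V → ℝ) (hx : ∀ ℓ, 0 ≤ x ℓ) (P : V × V → Prop)
    (hup : ∀ ℓ ℓ', ℓ' ∈ σ ℓ → P ℓ' → P ℓ)
    (harc : ∀ ℓ', P ℓ' → ∀ z, T.arcOnPath ℓ'.1 ℓ'.2 z → True)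
    (harcP : ∃ z : V, ∀ ℓ', P ℓ' → T.arcOnPath ℓ'.1 ℓ'.2 z) :
    (∑ ℓ : V × V, if P ℓ then splitSol σ x ℓ else 0) ≤
      (∑ ℓ : V × V, if P ℓ then x ℓ else 0) := by
  obtain ⟨z, hz⟩ := harcP
  have huniq : ∀ ℓ ℓ₁ ℓ₂, ℓ₁ ∈ σ ℓ → ℓ₂ ∈ σ ℓ → P ℓ₁ → P ℓ₂ → ℓ₁ = ℓ₂ := by
    intro ℓ ℓ₁ ℓ₂ h1 h2 hp1 hp2
    by_contra hne
    exact (hσ ℓ).2.2.2 ℓ₁ h1 ℓ₂ h2 hne z (hz ℓ₁ hp1) (hz ℓ₂ hp2)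
  have step1 : (∑ ℓ : V × V, if P ℓ then splitSol σ x ℓ else 0) =
      ∑ ℓ : V × V, ∑ ℓ' : V × V, if P ℓ ∧ ℓ ∈ σ ℓ' then x ℓ' else 0 := by
    apply Finset.sum_congr rfl
    intro ℓ _
    by_cases h : P ℓ
    · simp only [h, if_true, true_and, splitSol]
    · simp [h]
  rw [step1, Finset.sum_comm]
  apply Finset.sum_le_sum
  intro ℓ' _
  -- goal : ∑ ℓ, (if P ℓ ∧ ℓ ∈ σ ℓ' then x ℓ' else 0) ≤ if P ℓ' then x ℓ' else 0
  by_cases hex : ∃ ℓ₀ : V × V, P ℓ₀ ∧ ℓ₀ ∈ σ ℓ'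
  · obtain ⟨ℓ₀, hp0, hm0⟩ := hex
    have hPℓ' : P ℓ' := hup ℓ' ℓ₀ hm0 hp0
    rw [if_pos hPℓ']
    have heq : ∀ ℓ : V × V, (if P ℓ ∧ ℓ ∈ σ ℓ' then x ℓ' else 0) =
        if ℓ = ℓ₀ then x ℓ' else 0 := by
      intro ℓ
      by_cases h : P ℓ ∧ ℓ ∈ σ ℓ'
      · rw [if_pos h, if_pos (huniq ℓ' ℓ ℓ₀ h.2 hm0 h.1 hp0)]
      · rw [if_neg h, if_neg (by intro heq; subst heq; exact h ⟨hp0, hm0⟩)]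
    simp only [heq]
    rw [Finset.sum_ite_eq' Finset.univ ℓ₀ (fun _ => x ℓ')]
    simp [hx ℓ']
  · have : ∀ ℓ : V × V, (if P ℓ ∧ ℓ ∈ σ ℓ' then x ℓ' else 0) = 0 := by
      intro ℓ
      rw [if_neg (fun h => hex ⟨ℓ, h⟩)]
    simp only [this, Finset.sum_const_zero]
    by_cases h : P ℓ' <;> simp [h, hx ℓ']

end AuxLemmas

/-- Splitting cannot increase the total LP value on the links pointing
into, or out of, the subtree of a non-root vertex `v`. -/
theorem split_value_pointing_into_out {V : Type*} [Fintype V]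
    (T : ArcTree V) (v : V) (hv : v ≠ T.root)
    (x : V × V → ℝ) (hx : ∀ ℓ, 0 ≤ x ℓ)
    (σ : V × V → Finset (V × V)) (hσ : IsSplitting T σ) :
    (∑ ℓ : V × V, if pointsInto T v ℓ then splitSol σ x ℓ else 0) ≤
      (∑ ℓ : V × V, if pointsInto T v ℓ then x ℓ else 0) ∧
    (∑ ℓ : V × V, if pointsOut T v ℓ then splitSol σ x ℓ else 0) ≤
      (∑ ℓ : V × V, if pointsOut T v ℓ then x ℓ else 0) := by
  constructor
  · exact split_sum_le hσ x hx (pointsInto T v)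
      (fun ℓ ℓ' h hp => shadow_pointsInto hv hσ h hp)
      (fun _ _ _ _ => trivial)
      ⟨v, fun ℓ' hp => pointsInto_arcOnPath hv hp⟩
  · exact split_sum_le hσ x hx (pointsOut T v)
      (fun ℓ ℓ' h hp => shadow_pointsOut hv hσ h hp)
      (fun _ _ _ _ => trivial)
      ⟨v, fun ℓ' hp => pointsOut_arcOnPath hv hp⟩
end
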